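/- Let M, B : ℝ × ℝ → M₂(ℂ) be continuously differentiable matrix-valued functions of (x, t) satisfying the zero-curvature equation ∂ₜM − ∂ₓB = B·M − M·B everywhere, and let T : ℝ × ℝ → M₂(ℂ) be twice continuously differentiable with T(0, t) = I for all t and ∂ₓT(x, t) = M(x, t) · T(x, t) for all (x, t). Then for all (x, t): ∂ₜT(x, t) = B(x, t) · T(x, t) − T(x, t) · B(0, t). -/

import Mathlib

open Set

private lemma pd_fst {g : ℝ × ℝ → ℂ} {x t : ℝ} (hg : DifferentiableAt ℝ g (x, t)) :
    HasDerivAt (fun x' : ℝ => g (x', t)) (fderiv ℝ g (x, t) (1, 0)) x :=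
  hg.hasFDerivAt.comp_hasDerivAt x (HasDerivAt.prodMk (hasDerivAt_id x) (hasDerivAt_const x t))

private lemma pd_snd {g : ℝ × ℝ → ℂ} {x t : ℝ} (hg : DifferentiableAt ℝ g (x, t)) :
    HasDerivAt (fun s : ℝ => g (x, s)) (fderiv ℝ g (x, t) (0, 1)) t :=
  hg.hasFDerivAt.comp_hasDerivAt t (HasDerivAt.prodMk (hasDerivAt_const t x) (hasDerivAt_id t))

private lemma diff_fst {g : ℝ × ℝ → ℂ} (hg : Differentiable ℝ g) (x t : ℝ) :
    DifferentiableAt ℝ (fun x' : ℝ => g (x', t)) x :=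
  (hg (x, t)).comp x (DifferentiableAt.prodMk differentiableAt_id (differentiableAt_const t))

private lemma diff_snd {g : ℝ × ℝ → ℂ} (hg : Differentiable ℝ g) (x t : ℝ) :
    DifferentiableAt ℝ (fun s : ℝ => g (x, s)) t :=
  (hg (x, t)).comp t (DifferentiableAt.prodMk (differentiableAt_const x) differentiableAt_id)

/-- Clairaut-type lemma: both mixed partials are a common value `c`. -/
private lemma mixed {g : ℝ × ℝ → ℂ} (hg : ContDiff ℝ 2 g) (x t : ℝ) :
    ∃ c : ℂ, HasDerivAt (fun x' => deriv (fun s => g (x', s)) t) c x ∧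
      HasDerivAt (fun s => deriv (fun x' => g (x', s)) x) c t := by
  have hdiff : Differentiable ℝ g := hg.differentiable two_ne_zero
  have hC1 : ContDiff ℝ 1 (fderiv ℝ g) := hg.fderiv_right (le_refl 2)
  have hdiff' : Differentiable ℝ (fderiv ℝ g) := hC1.differentiable one_ne_zero
  refine ⟨fderiv ℝ (fderiv ℝ g) (x, t) (0, 1) (1, 0), ?_, ?_⟩
  · have e1 : (fun x' => deriv (fun s => g (x', s)) t) =
        fun x' => fderiv ℝ g (x', t) (0, 1) := by
      funext x'
      exact (pd_snd (hdiff (x', t))).deriv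
    rw [e1]
    have h1 := pd_fst (g := fun p => fderiv ℝ g p (0, 1)) (x := x) (t := t)
      (((hC1.clm_apply (contDiff_const (c := ((0 : ℝ), (1 : ℝ))))).differentiable one_ne_zero) (x, t))
    rw [fderiv_clm_apply (hdiff' (x, t)) (differentiableAt_const _)] at h1
    simp only [fderiv_fun_const, fderiv_const, ContinuousLinearMap.comp_zero, zero_add,
      Pi.zero_apply, ContinuousLinearMap.add_apply, ContinuousLinearMap.comp_apply,
      ContinuousLinearMap.zero_apply, ContinuousLinearMap.flip_apply] at h1
    rwa [second_derivative_symmetric (fun y => (hdiff y).hasFDerivAt)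
      (hdiff' (x, t)).hasFDerivAt (1, 0) (0, 1)] at h1
  · have e2 : (fun s => deriv (fun x' => g (x', s)) x) =
        fun s => fderiv ℝ g (x, s) (1, 0) := by
      funext s
      exact (pd_fst (hdiff (x, s))).deriv
    rw [e2]
    have h2 := pd_snd (g := fun p => fderiv ℝ g p (1, 0)) (x := x) (t := t)
      (((hC1.clm_apply (contDiff_const (c := ((1 : ℝ), (0 : ℝ))))).differentiable one_ne_zero) (x, t))
    rw [fderiv_clm_apply (hdiff' (x, t)) (differentiableAt_const _)] at h2
    simpa only [fderiv_fun_const, fderiv_const, ContinuousLinearMap.comp_zero, zero_add,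
      Pi.zero_apply, ContinuousLinearMap.add_apply, ContinuousLinearMap.comp_apply,
      ContinuousLinearMap.zero_apply, ContinuousLinearMap.flip_apply] using h2

/-- Equation (eq:SecondStage) of Proposition 3.2: if `M`, `B` satisfy the
zero-curvature equation, `T(0,t) = I` and `∂ₓT = M·T`, then
`∂ₜT(x,t) = B(x,t)·T(x,t) − T(x,t)·B(0,t)`. -/
theorem stmt4 (M B T : ℝ × ℝ → Matrix (Fin 2) (Fin 2) ℂ)
    (hM : ∀ i j : Fin 2, ContDiff ℝ 1 (fun p : ℝ × ℝ => M p i j))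
    (hB : ∀ i j : Fin 2, ContDiff ℝ 1 (fun p : ℝ × ℝ => B p i j))
    (hT : ∀ i j : Fin 2, ContDiff ℝ 2 (fun p : ℝ × ℝ => T p i j))
    (hzc : ∀ (p : ℝ × ℝ) (i j : Fin 2),
      deriv (fun t : ℝ => M (p.1, t) i j) p.2 - deriv (fun x : ℝ => B (x, p.2) i j) p.1
        = (B p * M p - M p * B p) i j)
    (hT0 : ∀ t : ℝ, T (0, t) = 1)
    (hx : ∀ (p : ℝ × ℝ) (i j : Fin 2),
      deriv (fun x : ℝ => T (x, p.2) i j) p.1 = (M p * T p) i j) :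
    ∀ (p : ℝ × ℝ) (i j : Fin 2),
      deriv (fun t : ℝ => T (p.1, t) i j) p.2 = (B p * T p - T p * B (0, p.2)) i j := by
  have hMd : ∀ i j : Fin 2, Differentiable ℝ (fun p : ℝ × ℝ => M p i j) :=
    fun i j => (hM i j).differentiable one_ne_zero
  have hBd : ∀ i j : Fin 2, Differentiable ℝ (fun p : ℝ × ℝ => B p i j) :=
    fun i j => (hB i j).differentiable one_ne_zero
  have hTd : ∀ i j : Fin 2, Differentiable ℝ (fun p : ℝ × ℝ => T p i j) :=
    fun i j => (hT i j).differentiable two_ne_zero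
  intro p
  obtain ⟨x₀, t⟩ := p
  -- derivative in x of the t-partial of T
  have claimF : ∀ (y : ℝ) (i j : Fin 2), HasDerivAt (fun z => deriv (fun s => T (z, s) i j) t)
      (deriv (fun s => M (y, s) i 0) t * T (y, t) 0 j
        + M (y, t) i 0 * deriv (fun s => T (y, s) 0 j) t
        + (deriv (fun s => M (y, s) i 1) t * T (y, t) 1 j
        + M (y, t) i 1 * deriv (fun s => T (y, s) 1 j) t)) y := by
    intro y i j
    have hTat : ∀ k : Fin 2, HasDerivAt (fun s => T (y, s) k j)
        (deriv (fun s => T (y, s) k j) t) t :=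
      fun k => (diff_snd (hTd k j) y t).hasDerivAt
    have hMat : ∀ k : Fin 2, HasDerivAt (fun s => M (y, s) i k)
        (deriv (fun s => M (y, s) i k) t) t :=
      fun k => (diff_snd (hMd i k) y t).hasDerivAt
    obtain ⟨c, hc1, hc2⟩ := mixed (hT i j) y t
    have e : (fun s => deriv (fun x' => T (x', s) i j) y) =
        fun s => M (y, s) i 0 * T (y, s) 0 j + M (y, s) i 1 * T (y, s) 1 j := by
      funext s
      have h : deriv (fun x' => T (x', s) i j) y = (M (y, s) * T (y, s)) i j := hx (y, s) i j
      rw [h, Matrix.mul_apply, Fin.sum_univ_two]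
    rw [e] at hc2
    have direct := ((hMat 0).mul (hTat 0)).add ((hMat 1).mul (hTat 1))
    have hcv := hc2.unique direct
    rw [hcv] at hc1
    exact hc1
  -- derivative in x of the candidate RHS
  have claimG : ∀ (y : ℝ) (i j : Fin 2),
      HasDerivAt (fun z => (B (z, t) * T (z, t) - T (z, t) * B (0, t)) i j)
      (deriv (fun z => B (z, t) i 0) y * T (y, t) 0 j
          + B (y, t) i 0 * (M (y, t) * T (y, t)) 0 j
        + (deriv (fun z => B (z, t) i 1) y * T (y, t) 1 j
          + B (y, t) i 1 * (M (y, t) * T (y, t)) 1 j)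
        - ((M (y, t) * T (y, t)) i 0 * B (0, t) 0 j
          + (M (y, t) * T (y, t)) i 1 * B (0, t) 1 j)) y := by
    intro y i j
    have hBat : ∀ k : Fin 2, HasDerivAt (fun z => B (z, t) i k)
        (deriv (fun z => B (z, t) i k) y) y :=
      fun k => (diff_fst (hBd i k) y t).hasDerivAt
    have hTx : ∀ k j' : Fin 2, HasDerivAt (fun z => T (z, t) k j')
        ((M (y, t) * T (y, t)) k j') y := by
      intro k j'
      have h := (diff_fst (hTd k j') y t).hasDerivAt
      have e : deriv (fun z => T (z, t) k j') y = (M (y, t) * T (y, t)) k j' := hx (y, t) k j'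
      rwa [e] at h
    have eG : (fun z => (B (z, t) * T (z, t) - T (z, t) * B (0, t)) i j) =
        fun z => B (z, t) i 0 * T (z, t) 0 j + B (z, t) i 1 * T (z, t) 1 j
          - (T (z, t) i 0 * B (0, t) 0 j + T (z, t) i 1 * B (0, t) 1 j) := by
      funext z
      simp [Matrix.mul_apply, Matrix.sub_apply, Fin.sum_univ_two]
    rw [eG]
    exact (((hBat 0).mul (hTx 0 j)).add ((hBat 1).mul (hTx 1 j))).sub
      (((hTx i 0).mul_const _).add ((hTx i 1).mul_const _))
  -- the difference D satisfies the linear ODE D' = M·D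
  set D : ℝ → Fin 2 → Fin 2 → ℂ := fun y i j =>
    deriv (fun s => T (y, s) i j) t - (B (y, t) * T (y, t) - T (y, t) * B (0, t)) i j with hDdef
  have claimD : ∀ (y : ℝ) (i j : Fin 2), HasDerivAt (fun z => D z i j)
      (M (y, t) i 0 * D y 0 j + M (y, t) i 1 * D y 1 j) y := by
    intro y i j
    have h := (claimF y i j).sub (claimG y i j)
    have halg :
        (deriv (fun s => M (y, s) i 0) t * T (y, t) 0 j
          + M (y, t) i 0 * deriv (fun s => T (y, s) 0 j) t
          + (deriv (fun s => M (y, s) i 1) t * T (y, t) 1 j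
          + M (y, t) i 1 * deriv (fun s => T (y, s) 1 j) t))
        - (deriv (fun z => B (z, t) i 0) y * T (y, t) 0 j
            + B (y, t) i 0 * (M (y, t) * T (y, t)) 0 j
          + (deriv (fun z => B (z, t) i 1) y * T (y, t) 1 j
            + B (y, t) i 1 * (M (y, t) * T (y, t)) 1 j)
          - ((M (y, t) * T (y, t)) i 0 * B (0, t) 0 j
            + (M (y, t) * T (y, t)) i 1 * B (0, t) 1 j))
        = M (y, t) i 0 * D y 0 j + M (y, t) i 1 * D y 1 j := by
      have h0 : deriv (fun s => M (y, s) i 0) t - deriv (fun z => B (z, t) i 0) y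
          = (B (y, t) * M (y, t) - M (y, t) * B (y, t)) i 0 := hzc (y, t) i 0
      have h1 : deriv (fun s => M (y, s) i 1) t - deriv (fun z => B (z, t) i 1) y
          = (B (y, t) * M (y, t) - M (y, t) * B (y, t)) i 1 := hzc (y, t) i 1
      simp only [hDdef, Matrix.mul_apply, Matrix.sub_apply, Fin.sum_univ_two] at h0 h1 ⊢
      linear_combination T (y, t) 0 j * h0 + T (y, t) 1 j * h1
    rw [halg] at h
    exact h
  -- initial condition D 0 = 0
  have hD0 : D 0 = fun _ _ => 0 := by
    funext i j
    simp only [hDdef]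
    have h1 : (fun s => T ((0 : ℝ), s) i j) = fun _ => (1 : Matrix (Fin 2) (Fin 2) ℂ) i j := by
      funext s; rw [hT0 s]
    rw [h1, deriv_const, hT0 t]
    simp
  -- uniqueness of solutions of the ODE on a compact interval around 0 and x₀
  have hfinal : D x₀ = fun _ _ => 0 := by
    set a : ℝ := -(|x₀| + 1) with ha
    set b : ℝ := |x₀| + 1 with hb
    have hab : a < b := by simp only [ha, hb]; nlinarith [abs_nonneg x₀]
    have hMcont : ∀ i k : Fin 2, Continuous fun y : ℝ => M (y, t) i k := fun i k =>
      ((hM i k).continuous).comp (continuous_id.prodMk continuous_const)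
    set φ : ℝ → ℝ := fun y => ‖M (y, t) 0 0‖ + ‖M (y, t) 0 1‖ + ‖M (y, t) 1 0‖ + ‖M (y, t) 1 1‖
      with hφ
    have hφc : Continuous φ :=
      (((hMcont 0 0).norm.add (hMcont 0 1).norm).add (hMcont 1 0).norm).add (hMcont 1 1).norm
    obtain ⟨C, hC⟩ := (isCompact_Icc (a := a) (b := b)).exists_bound_of_continuousOn
      hφc.continuousOn
    have hC0 : 0 ≤ C := le_trans (norm_nonneg _) (hC a ⟨le_rfl, hab.le⟩)
    have hφle : ∀ y ∈ Icc a b, φ y ≤ C := fun y hy => (le_abs_self _).trans (hC y hy)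
    set q : ℝ → ℝ := fun y => max a (min y b) with hqdef
    have hq : ∀ y ∈ Icc a b, q y = y := fun y hy => by
      simp only [hqdef]; rw [min_eq_left hy.2, max_eq_right hy.1]
    have hqmem : ∀ y : ℝ, q y ∈ Icc a b := fun y =>
      ⟨le_max_left _ _, max_le hab.le (min_le_right _ _)⟩
    set v : ℝ → (Fin 2 → Fin 2 → ℂ) → (Fin 2 → Fin 2 → ℂ) :=
      fun y A i j => M (q y, t) i 0 * A 0 j + M (q y, t) i 1 * A 1 j with hv
    have hmle : ∀ (y : ℝ) (i : Fin 2), ‖M (q y, t) i 0‖ + ‖M (q y, t) i 1‖ ≤ C := by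
      intro y i
      refine le_trans ?_ (hφle (q y) (hqmem y))
      have n1 := norm_nonneg (M (q y, t) 0 0); have n2 := norm_nonneg (M (q y, t) 0 1)
      have n3 := norm_nonneg (M (q y, t) 1 0); have n4 := norm_nonneg (M (q y, t) 1 1)
      fin_cases i <;> simp only [Fin.mk_zero, Fin.mk_one, Fin.isValue, hφ] <;> linarith
    have hlip : ∀ y : ℝ, LipschitzWith ⟨C, hC0⟩ (v y) := by
      intro y
      apply LipschitzWith.of_dist_le_mul
      intro A A'
      rw [dist_eq_norm, dist_eq_norm]
      show ‖v y A - v y A'‖ ≤ C * ‖A - A'‖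
      rw [pi_norm_le_iff_of_nonneg (mul_nonneg hC0 (norm_nonneg _))]
      intro i
      rw [pi_norm_le_iff_of_nonneg (mul_nonneg hC0 (norm_nonneg _))]
      intro j
      have e : (v y A - v y A') i j
          = M (q y, t) i 0 * (A 0 j - A' 0 j) + M (q y, t) i 1 * (A 1 j - A' 1 j) := by
        simp only [Pi.sub_apply, hv]; ring
      rw [e]
      have n1 : ‖A 0 j - A' 0 j‖ ≤ ‖A - A'‖ := by
        have h1 : ‖(A - A') 0 j‖ ≤ ‖(A - A') 0‖ := norm_le_pi_norm ((A - A') 0) j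
        have h2 : ‖(A - A') 0‖ ≤ ‖A - A'‖ := norm_le_pi_norm (A - A') 0
        simpa [Pi.sub_apply] using h1.trans h2
      have n2 : ‖A 1 j - A' 1 j‖ ≤ ‖A - A'‖ := by
        have h1 : ‖(A - A') 1 j‖ ≤ ‖(A - A') 1‖ := norm_le_pi_norm ((A - A') 1) j
        have h2 : ‖(A - A') 1‖ ≤ ‖A - A'‖ := norm_le_pi_norm (A - A') 1
        simpa [Pi.sub_apply] using h1.trans h2
      calc ‖M (q y, t) i 0 * (A 0 j - A' 0 j) + M (q y, t) i 1 * (A 1 j - A' 1 j)‖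
          ≤ ‖M (q y, t) i 0‖ * ‖A 0 j - A' 0 j‖ + ‖M (q y, t) i 1‖ * ‖A 1 j - A' 1 j‖ := by
            refine (norm_add_le _ _).trans ?_
            rw [norm_mul, norm_mul]
        _ ≤ C * ‖A - A'‖ := by
            nlinarith [norm_nonneg (A - A'), norm_nonneg (M (q y, t) i 0),
              norm_nonneg (M (q y, t) i 1), hmle y i]
    have key := ODE_solution_unique_of_mem_Icc (v := v)
      (s := fun _ => (univ : Set (Fin 2 → Fin 2 → ℂ)))
      (K := ⟨C, hC0⟩) (f := D) (g := fun _ => fun _ _ => 0) (t₀ := 0) (a := a) (b := b)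
      (fun y _ => (hlip y).lipschitzOnWith)
      (by constructor <;> [simp only [ha]; simp only [hb]] <;> nlinarith [abs_nonneg x₀])
      (Continuous.continuousOn (continuous_pi fun i => continuous_pi fun j =>
        continuous_iff_continuousAt.2 fun y => (claimD y i j).continuousAt))
      (fun y hy => hasDerivAt_pi.2 fun i => hasDerivAt_pi.2 fun j => by
        have h := claimD y i j
        have e : v y (D y) i j = M (y, t) i 0 * D y 0 j + M (y, t) i 1 * D y 1 j := by
          simp only [hv, hq y (Ioo_subset_Icc_self hy)]
        rw [e]; exact h)
      (fun _ _ => mem_univ _)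
      continuousOn_const
      (fun y hy => by
        have e : v y (fun _ _ => (0 : ℂ)) = fun _ _ => 0 := by
          funext i j; simp [hv]
        simp only [e]; exact hasDerivAt_const y (fun _ _ => (0 : ℂ)))
      (fun _ _ => mem_univ _)
      hD0
    exact key ⟨by simp only [ha]; nlinarith [neg_abs_le x₀, abs_nonneg x₀],
      by simp only [hb]; nlinarith [le_abs_self x₀]⟩
  intro i j
  have hij := congrFun (congrFun hfinal i) j
  simp only [hDdef] at hij
  show deriv (fun s => T (x₀, s) i j) t = (B (x₀, t) * T (x₀, t) - T (x₀, t) * B (0, t)) i j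
  exact sub_eq_zero.mp hij
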